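/- Let P, η, k > 0 and γ ∈ (0,1) be constants. The scalar tracking error dynamics ė(t) = −(P/η) k |e(t)|^γ sgn(e(t)) + Γ(t), with input Γ ∈ L^∞_loc(ℝ≥0; ℝ), are finite-time input-to-state stable with respect to Γ: there exist a function ϑ of class K and a function β of class GKL such that every solution e : ℝ≥0 → ℝ satisfies |e(t)| ≤ β(|e(0)|, t) + ϑ(ess sup_{s∈(0,t)} |Γ(s)|) for all t ≥ 0. -/

import Mathlib

open MeasureTheory Set Filter

/-- A class-`K` comparison function: continuous, strictly increasing on `[0,∞)`,
vanishing at `0` (and `[0,∞)`-valued on `[0,∞)`). -/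
def ClassK (ϑ : ℝ → ℝ) : Prop :=
  ContinuousOn ϑ (Ici 0) ∧ StrictMonoOn ϑ (Ici 0) ∧ ϑ 0 = 0 ∧ ∀ s ∈ Ici (0:ℝ), 0 ≤ ϑ s

/-- A class-`GKL` function: `β(·,0)` is of class `K`, `β` is `[0,∞)`-valued, and
for each fixed `s > 0` there is `T̃(s) ≥ 0` with `β(s,t) = 0` for all `t ≥ T̃(s)`. -/
def ClassGKL (β : ℝ → ℝ → ℝ) : Prop :=
  (∀ s ∈ Ici (0:ℝ), ∀ t ∈ Ici (0:ℝ), 0 ≤ β s t) ∧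
  ClassK (fun s => β s 0) ∧
  ∀ s > (0:ℝ), ∃ T ≥ (0:ℝ), ∀ t ≥ T, β s t = 0


lemma mul_sign_eq_abs (x : ℝ) : x * Real.sign x = |x| := by
  rcases lt_trichotomy x 0 with h | h | h
  · rw [Real.sign_of_neg h, abs_of_neg h]; ring
  · simp [h]
  · rw [Real.sign_of_pos h, abs_of_pos h]; ring

lemma max_rpow_hasDerivAt (a q A t : ℝ) (ha : 0 < a) (hq : 1 < q) :
    HasDerivAt (fun s => max (A - a * s) 0 ^ q) (-(a * q) * max (A - a * t) 0 ^ (q - 1)) t := by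
  have hq0 : q ≠ 0 := by linarith
  have hq1 : q - 1 ≠ 0 := by intro h; apply hq.ne'; linarith
  have hcont : Continuous fun s : ℝ => A - a * s := by continuity
  rcases lt_trichotomy (A - a * t) 0 with h | h | h
  · have hev : ∀ᶠ s in nhds t, (A - a * s) < 0 :=
      (isOpen_lt hcont continuous_const).eventually_mem h
    have : HasDerivAt (fun _ : ℝ => (0:ℝ)) 0 t := hasDerivAt_const t 0
    have h2 : HasDerivAt (fun s => max (A - a * s) 0 ^ q) 0 t := by
      apply this.congr_of_eventuallyEq
      filter_upwards [hev] with s hs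
      rw [max_eq_right hs.le, Real.zero_rpow hq0]
    convert h2 using 1
    rw [max_eq_right h.le, Real.zero_rpow hq1]; ring
  · -- kink
    rw [hasDerivAt_iff_tendsto_slope]
    have hval : -(a * q) * max (A - a * t) 0 ^ (q - 1) = 0 := by
      rw [h, max_self, Real.zero_rpow hq1]; ring
    rw [hval]
    have hA : A = a * t := by linarith
    have hft : max (A - a * t) 0 ^ q = 0 := by rw [h, max_self, Real.zero_rpow hq0]
    have hbnd : ∀ᶠ s in nhdsWithin t {t}ᶜ,
        ‖slope (fun s => max (A - a * s) 0 ^ q) t s‖ ≤ a ^ q * |s - t| ^ (q - 1) := by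
      filter_upwards [self_mem_nhdsWithin] with s (hs : s ≠ t)
      have hd : s - t ≠ 0 := sub_ne_zero.mpr hs
      have hdpos : 0 < |s - t| := abs_pos.mpr hd
      have hfs_nonneg : 0 ≤ max (A - a * s) 0 ^ q := Real.rpow_nonneg (le_max_right _ _) _
      have hfs_le : max (A - a * s) 0 ^ q ≤ (a * |s - t|) ^ q := by
        apply Real.rpow_le_rpow (le_max_right _ _) _ (by linarith)
        apply max_le
        · have : t - s ≤ |s - t| := by rw [abs_sub_comm]; exact le_abs_self _
          calc A - a * s = a * (t - s) := by rw [hA]; ring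
          _ ≤ a * |s - t| := by nlinarith
        · positivity
      have hnorm : ‖slope (fun s => max (A - a * s) 0 ^ q) t s‖
          = max (A - a * s) 0 ^ q / |s - t| := by
        rw [slope_def_field, hft, sub_zero, norm_div, Real.norm_eq_abs, Real.norm_eq_abs,
          abs_of_nonneg hfs_nonneg, abs_sub_comm]
      rw [hnorm]
      rw [div_le_iff₀ hdpos]
      calc max (A - a * s) 0 ^ q ≤ (a * |s - t|) ^ q := hfs_le
        _ = a ^ q * |s - t| ^ q := Real.mul_rpow ha.le (abs_nonneg _)
        _ = a ^ q * (|s - t| ^ (q - 1) * |s - t|) := by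
            rw [← Real.rpow_add_one (by positivity) (q-1), sub_add_cancel]
        _ = a ^ q * |s - t| ^ (q - 1) * |s - t| := by ring
    have htend : Tendsto (fun s => a ^ q * |s - t| ^ (q - 1)) (nhdsWithin t {t}ᶜ) (nhds 0) := by
      have h1 : Tendsto (fun s : ℝ => |s - t|) (nhds t) (nhds 0) := by
        have : Continuous fun s : ℝ => |s - t| := by continuity
        have h0 : |t - t| = 0 := by simp
        simpa [h0] using this.tendsto t
      have h2 : Tendsto (fun s : ℝ => |s - t| ^ (q - 1)) (nhds t) (nhds 0) := by
        have hc : ContinuousAt (fun x : ℝ => x ^ (q - 1)) 0 :=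
          Real.continuousAt_rpow_const 0 (q - 1) (Or.inr (by linarith))
        have := hc.tendsto.comp h1
        simpa [Function.comp_def, Real.zero_rpow hq1] using this
      have := h2.const_mul (a ^ q)
      simp only [mul_zero] at this
      exact this.mono_left nhdsWithin_le_nhds
    exact squeeze_zero_norm' hbnd htend
  · have hev : ∀ᶠ s in nhds t, 0 < (A - a * s) :=
      (isOpen_lt continuous_const hcont).eventually_mem h
    have hinner : HasDerivAt (fun s : ℝ => A - a * s) (-a) t := by
      simpa using ((hasDerivAt_id t).const_mul a).const_sub A
    have houter : HasDerivAt (fun x : ℝ => x ^ q) (q * (A - a * t) ^ (q - 1)) (A - a * t) :=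
      Real.hasDerivAt_rpow_const (Or.inl h.ne')
    have hcomp := houter.comp t hinner
    have h2 : HasDerivAt (fun s => max (A - a * s) 0 ^ q)
        (q * (A - a * t) ^ (q - 1) * (-a)) t := by
      apply hcomp.congr_of_eventuallyEq
      filter_upwards [hev] with s hs
      simp [Function.comp, max_eq_left hs.le]
    convert h2 using 1
    rw [max_eq_left h.le]; ring

set_option maxHeartbeats 1000000 in
/-- the scalar tracking error dynamics
`ė(t) = −(P/η) k |e(t)|^γ sgn(e(t)) + Γ(t)`, with `P, η, k > 0`, `γ ∈ (0,1)`
and input `Γ ∈ L^∞_loc(ℝ≥0;ℝ)`, are finite-time input-to-state stable with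
respect to `Γ`: there exist `ϑ` of class `K` and `β` of class `GKL` such that
every solution satisfies
`|e(t)| ≤ β(|e(0)|,t) + ϑ(ess sup_{s∈(0,t)} |Γ(s)|)` for all `t ≥ 0`. -/
theorem tracking_error_ftiss
    (P η k γ : ℝ) (hP : 0 < P) (hη : 0 < η) (hk : 0 < k) (hγ : γ ∈ Ioo (0:ℝ) 1)
    (Γ : ℝ → ℝ)
    (hΓ_meas : AEStronglyMeasurable Γ volume)
    (hΓ_loc : ∀ T > (0:ℝ), ∃ M : ℝ, ∀ᵐ s ∂(volume.restrict (Ioo 0 T)), |Γ s| ≤ M) :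
    ∃ ϑ β : _, ClassK ϑ ∧ ClassGKL β ∧
      ∀ e : ℝ → ℝ,
        (∀ t ≥ (0:ℝ),
          HasDerivAt e (-(P / η) * k * |e t| ^ γ * Real.sign (e t) + Γ t) t) →
        ∀ t ≥ (0:ℝ),
          |e t| ≤ β |e 0| t + ϑ (essSup (fun s => |Γ s|) (volume.restrict (Ioo 0 t))) := by
  obtain ⟨hγ0, hγ1⟩ := hγ
  set c := P / η * k with hc_def
  have hc : 0 < c := by positivity
  have h1γ : 0 < 1 - γ := by linarith
  set q : ℝ := 1 / (1 - γ) with hq_def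
  have hqpos : 0 < q := by positivity
  have hq1 : 1 < q := by rw [hq_def, lt_div_iff₀ h1γ]; linarith
  set a : ℝ := c / 2 * (1 - γ) with ha_def
  have ha : 0 < a := by positivity
  have haq : a * q = c / 2 := by rw [ha_def, hq_def]; field_simp
  have hq1γ : (1 - γ) * q = 1 := by rw [hq_def]; field_simp
  have hqγ : q - 1 = q * γ := by rw [hq_def]; field_simp; ring
  set ϑ : ℝ → ℝ := fun x => (2 * max x 0 / c) ^ (1/γ : ℝ) + max x 0 with hϑ_def
  set β : ℝ → ℝ → ℝ := fun s t => max ((max s 0) ^ (1 - γ) - a * t) 0 ^ q with hβ_def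
  have hϑ_nonneg : ∀ x, 0 ≤ ϑ x := fun x =>
    add_nonneg (Real.rpow_nonneg (by positivity) _) (le_max_right _ _)
  have hβ_zero : ∀ s, 0 ≤ s → β s 0 = s := by
    intro s hs
    simp only [hβ_def]
    rw [max_eq_left hs, mul_zero, sub_zero, max_eq_left (Real.rpow_nonneg hs _),
      ← Real.rpow_mul hs, hq1γ, Real.rpow_one]
  refine ⟨ϑ, β, ⟨?_, ?_, ?_, fun s _ => hϑ_nonneg s⟩, ⟨?_, ⟨?_, ?_, ?_, ?_⟩, ?_⟩, ?_⟩
  · -- ϑ continuous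
    have hmax : Continuous fun x : ℝ => max x 0 := continuous_id.max continuous_const
    have h2 : Continuous fun x : ℝ => 2 * max x 0 / c := (continuous_const.mul hmax).div_const c
    have h3 : Continuous fun x : ℝ => (2 * max x 0 / c) ^ (1/γ : ℝ) :=
      continuous_iff_continuousAt.mpr fun x =>
        (Real.continuousAt_rpow_const _ _ (Or.inr (by positivity))).comp h2.continuousAt
    exact (h3.add hmax).continuousOn
  · -- ϑ strict mono
    intro x hx y hy hxy
    simp only [hϑ_def]
    rw [max_eq_left hx, max_eq_left hy]
    have hx' : (0:ℝ) ≤ x := hx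
    have h1 : (2 * x / c) ^ (1/γ : ℝ) ≤ (2 * y / c) ^ (1/γ : ℝ) := by
      apply Real.rpow_le_rpow (div_nonneg (by linarith) hc.le)
      · exact (div_le_div_iff_of_pos_right hc).mpr (by linarith)
      · positivity
    linarith
  · -- ϑ 0 = 0
    simp only [hϑ_def]
    norm_num
    exact Real.zero_rpow (inv_ne_zero (ne_of_gt hγ0))
  · -- β nonneg
    intro s _ t _
    exact Real.rpow_nonneg (le_max_right _ _) _
  · -- β · 0 continuous on Ici 0
    exact continuousOn_id.congr fun s hs => hβ_zero s hs
  · -- β · 0 strict mono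
    intro x hx y hy hxy
    show β x 0 < β y 0
    rw [hβ_zero x hx, hβ_zero y hy]; exact hxy
  · -- β 0 0 = 0
    exact hβ_zero 0 le_rfl
  · -- β · 0 nonneg
    intro s hs
    show 0 ≤ β s 0
    rw [hβ_zero s hs]; exact hs
  · -- GKL decay
    intro s _
    refine ⟨max s 0 ^ (1-γ) / a, by positivity, fun t ht => ?_⟩
    simp only [hβ_def]
    have h1 : max s 0 ^ (1-γ) - a * t ≤ 0 := by
      rw [sub_nonpos]
      calc max s 0 ^ (1-γ) = a * (max s 0 ^ (1-γ) / a) := by field_simp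
        _ ≤ a * t := mul_le_mul_of_nonneg_left ht ha.le
    rw [max_eq_right h1, Real.zero_rpow (ne_of_gt hqpos)]
  -- main part
  intro e he t₀ ht₀
  have he' : ∀ t ≥ (0:ℝ), HasDerivAt e (-c * |e t| ^ γ * Real.sign (e t) + Γ t) t := by
    intro t ht
    have heq : -(P / η) * k * |e t| ^ γ * Real.sign (e t) + Γ t
        = -c * |e t| ^ γ * Real.sign (e t) + Γ t := by rw [hc_def]; ring
    exact heq ▸ he t ht
  rcases eq_or_lt_of_le ht₀ with hz0 | hpos
  · rw [← hz0, hβ_zero _ (abs_nonneg (e 0))]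
    linarith [hϑ_nonneg (essSup (fun s => |Γ s|) (volume.restrict (Ioo 0 0)))]
  obtain ⟨M₀, hM₀⟩ := hΓ_loc t₀ hpos
  set X := essSup (fun s => |Γ s|) (volume.restrict (Ioo 0 t₀)) with hX_def
  have hbdd : IsBoundedUnder (· ≤ ·) (ae (volume.restrict (Ioo 0 t₀))) (fun s => |Γ s|) :=
    ⟨M₀, eventually_map.mpr hM₀⟩
  have hXae : ∀ᵐ s ∂(volume.restrict (Ioo 0 t₀)), |Γ s| ≤ X := ae_le_essSup hbdd
  set N := max X 0 with hN_def
  have hN0 : 0 ≤ N := le_max_right _ _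
  have hNae : ∀ᵐ s : ℝ ∂volume, s ∈ Ioo 0 t₀ → |Γ s| ≤ N :=
    (ae_restrict_iff' measurableSet_Ioo).mp
      (hXae.mono fun s h => le_trans h (le_max_left _ _))
  have hMae : ∀ᵐ s : ℝ ∂volume, s ∈ Ioo 0 t₀ → |Γ s| ≤ M₀ :=
    (ae_restrict_iff' measurableSet_Ioo).mp hM₀
  set r : ℝ := (2 * N / c) ^ (1/γ : ℝ) with hr_def
  have hr0 : 0 ≤ r := Real.rpow_nonneg (by positivity) _
  have hrγ : c * r ^ γ = 2 * N := by
    rw [hr_def, ← Real.rpow_mul (by positivity)]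
    have h1 : 1/γ * γ = 1 := by field_simp
    rw [h1, Real.rpow_one]
    field_simp
  set s₀ := |e 0| with hs₀_def
  have hs₀ : 0 ≤ s₀ := abs_nonneg _
  set A := s₀ ^ (1 - γ) with hA_def
  have hA0 : 0 ≤ A := Real.rpow_nonneg hs₀ _
  set z : ℝ → ℝ := fun t => max (A - a * t) 0 with hz_def
  set y : ℝ → ℝ := fun t => z t ^ q with hy_def
  have hz_nonneg : ∀ t, 0 ≤ z t := fun t => le_max_right _ _
  have hy_nonneg : ∀ t, 0 ≤ y t := fun t => Real.rpow_nonneg (hz_nonneg t) _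
  have hy_deriv : ∀ t, HasDerivAt y (-(a*q) * z t ^ (q-1)) t := fun t =>
    max_rpow_hasDerivAt a q A t ha hq1
  have hy_gamma : ∀ t, z t ^ (q - 1) = y t ^ γ := by
    intro t
    simp only [hy_def]
    rw [← Real.rpow_mul (hz_nonneg t), ← hqγ]
  set D : ℝ → ℝ := fun t => (e t)^2 - (y t + r)^2 with hD_def
  set D' : ℝ → ℝ := fun t =>
    (-2*c) * |e t| ^ (γ+1) + 2 * e t * Γ t + 2 * (y t + r) * ((a*q) * z t ^ (q-1))
    with hD'_def
  have habs1 : ∀ x : ℝ, |x| ^ γ * |x| = |x| ^ (γ + 1) := by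
    intro x
    rcases eq_or_ne x 0 with rfl | hx
    · simp [Real.zero_rpow (ne_of_gt hγ0), Real.zero_rpow (by positivity : γ + 1 ≠ 0)]
    · rw [Real.rpow_add_one (abs_ne_zero.mpr hx)]
  have hD_deriv : ∀ t, 0 ≤ t → HasDerivAt D (D' t) t := by
    intro t ht
    have h2 : HasDerivAt (fun x => e x ^ 2)
        (2 * e t * (-c * |e t| ^ γ * Real.sign (e t) + Γ t)) t := by
      have := (he' t ht).fun_pow 2
      refine this.congr_deriv ?_
      norm_num
    have h3 : HasDerivAt (fun x => (y x + r) ^ 2)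
        (2 * (y t + r) * (-(a*q) * z t ^ (q-1))) t := by
      have := ((hy_deriv t).add_const r).fun_pow 2
      refine this.congr_deriv ?_
      norm_num
    have h4 := h2.sub h3
    have hsgn : e t * (|e t| ^ γ * Real.sign (e t)) = |e t| ^ (γ+1) := by
      rw [mul_comm (|e t| ^ γ), ← mul_assoc, mul_sign_eq_abs, mul_comm, habs1]
    have hval : D' t = 2 * e t * (-c * |e t| ^ γ * Real.sign (e t) + Γ t)
        - 2 * (y t + r) * (-(a*q) * z t ^ (q-1)) := by
      simp only [hD'_def]
      linear_combination (2*c) * hsgn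
    rw [hval]
    exact h4
  have hecont : ContinuousOn e (Ici 0) := fun t ht =>
    ((he' t ht).continuousAt).continuousWithinAt
  have hecontIcc : ContinuousOn e (Icc 0 t₀) := hecont.mono Icc_subset_Ici_self
  obtain ⟨B, hB⟩ := isCompact_Icc.exists_bound_of_continuousOn hecontIcc
  set B' := max B 0 with hB'_def
  have hB' : ∀ u ∈ Icc (0:ℝ) t₀, |e u| ≤ B' := fun u hu =>
    le_trans (le_of_eq (Real.norm_eq_abs _).symm) (le_trans (hB u hu) (le_max_left _ _))
  have hzcont : Continuous z := by
    simp only [hz_def]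
    exact (continuous_const.sub (continuous_const.mul continuous_id)).max continuous_const
  have hycont : Continuous y := by
    simp only [hy_def]
    exact continuous_iff_continuousAt.mpr fun x =>
      (Real.continuousAt_rpow_const _ _ (Or.inr hqpos.le)).comp hzcont.continuousAt
  have hz1cont : Continuous fun u => z u ^ (q-1) :=
    continuous_iff_continuousAt.mpr fun x =>
      (Real.continuousAt_rpow_const _ _ (Or.inr (by linarith))).comp hzcont.continuousAt
  have hsing : ∀ x₀ : ℝ, ∀ᵐ u : ℝ ∂volume, u ≠ x₀ := by
    intro x₀
    have hset : {u : ℝ | ¬ u ≠ x₀} = {x₀} := by ext u; simp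
    rw [ae_iff, hset]
    exact measure_singleton x₀
  have hint : IntegrableOn D' (Icc 0 t₀) volume := by
    have i1 : IntegrableOn (fun u => (-2*c) * |e u| ^ (γ+1)) (Icc 0 t₀) volume := by
      apply ContinuousOn.integrableOn_compact isCompact_Icc
      exact continuousOn_const.mul
        ((hecontIcc.abs).rpow_const fun x _ => Or.inr (by positivity))
    have i3 : IntegrableOn (fun u => 2 * (y u + r) * ((a*q) * z u ^ (q-1)))
        (Icc 0 t₀) volume := by
      apply ContinuousOn.integrableOn_compact isCompact_Icc
      exact Continuous.continuousOn (by
        exact (continuous_const.mul (hycont.add continuous_const)).mul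
          (continuous_const.mul hz1cont))
    have i2 : IntegrableOn (fun u => 2 * e u * Γ u) (Icc 0 t₀) volume := by
      have hmeas : AEStronglyMeasurable (fun u => 2 * e u * Γ u)
          (volume.restrict (Icc 0 t₀)) :=
        ((hecontIcc.aestronglyMeasurable measurableSet_Icc).const_mul 2).mul
          hΓ_meas.restrict
      apply Integrable.mono' (g := fun _ => 2 * B' * max M₀ 0)
        (integrableOn_const measure_Icc_lt_top.ne) hmeas
      have h1 : ∀ᵐ u ∂volume.restrict (Icc 0 t₀), u ∈ Icc 0 t₀ :=
        ae_restrict_mem measurableSet_Icc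
      have h2 : ∀ᵐ u ∂volume.restrict (Icc 0 t₀), (u ∈ Ioo 0 t₀ → |Γ u| ≤ M₀) :=
        ae_restrict_of_ae hMae
      have h3 : ∀ᵐ u ∂volume.restrict (Icc 0 t₀), u ≠ 0 :=
        ae_restrict_of_ae (hsing 0)
      have h4 : ∀ᵐ u ∂volume.restrict (Icc 0 t₀), u ≠ t₀ :=
        ae_restrict_of_ae (hsing t₀)
      filter_upwards [h1, h2, h3, h4] with u hu hΓu hne0 hnet
      have huIoo : u ∈ Ioo 0 t₀ :=
        ⟨lt_of_le_of_ne hu.1 (Ne.symm hne0), lt_of_le_of_ne hu.2 hnet⟩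
      have hb : 0 ≤ B' := le_max_right _ _
      have hM0' : |Γ u| ≤ max M₀ 0 := le_trans (hΓu huIoo) (le_max_left _ _)
      have hM0'' : 0 ≤ max M₀ 0 := le_max_right _ _
      rw [Real.norm_eq_abs, abs_mul, abs_mul]
      have h2' : |(2:ℝ)| = 2 := by norm_num
      rw [h2']
      have heB : |e u| ≤ B' := hB' u hu
      calc 2 * |e u| * |Γ u| ≤ 2 * B' * |Γ u| := by
            apply mul_le_mul_of_nonneg_right _ (abs_nonneg _)
            linarith
        _ ≤ 2 * B' * max M₀ 0 := by
            apply mul_le_mul_of_nonneg_left hM0'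
            positivity
    have := (i1.add i2).add i3
    simpa only [hD'_def, Pi.add_def] using this
  have hkey : ∀ u, 0 < u → u < t₀ → |Γ u| ≤ N → 0 ≤ D u → D' u ≤ 0 := by
    intro u _ _ hΓu hDu
    have hv0 : (0:ℝ) ≤ |e u| := abs_nonneg _
    have hw0 : 0 ≤ y u + r := add_nonneg (hy_nonneg u) hr0
    have hwv : y u + r ≤ |e u| := by
      have hsq : (y u + r)^2 ≤ (e u)^2 := by
        simp only [hD_def] at hDu; linarith
      calc y u + r = |y u + r| := (abs_of_nonneg hw0).symm
        _ = Real.sqrt ((y u + r)^2) := (Real.sqrt_sq_eq_abs _).symm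
        _ ≤ Real.sqrt ((e u)^2) := Real.sqrt_le_sqrt hsq
        _ = |e u| := Real.sqrt_sq_eq_abs _
    have hrv : r ≤ |e u| := le_trans (le_add_of_nonneg_left (hy_nonneg u)) hwv
    have hyv : y u ≤ |e u| := le_trans (le_add_of_nonneg_right hr0) hwv
    have hvγ : r ^ γ ≤ |e u| ^ γ := Real.rpow_le_rpow hr0 hrv hγ0.le
    have hyγ : y u ^ γ ≤ |e u| ^ γ := Real.rpow_le_rpow (hy_nonneg u) hyv hγ0.le
    have hvv : |e u| ^ γ * |e u| = |e u| ^ (γ+1) := habs1 (e u)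
    have hb2 : 2 * e u * Γ u ≤ c * (|e u| * |e u| ^ γ) := by
      have hstep : 2 * e u * Γ u ≤ 2 * |e u| * N := by
        calc 2 * e u * Γ u ≤ |2 * e u * Γ u| := le_abs_self _
          _ = 2 * |e u| * |Γ u| := by
              rw [abs_mul, abs_mul]; norm_num
          _ ≤ 2 * |e u| * N := by
              apply mul_le_mul_of_nonneg_left hΓu (by positivity)
      calc 2 * e u * Γ u ≤ 2 * |e u| * N := hstep
        _ = |e u| * (2 * N) := by ring
        _ = |e u| * (c * r ^ γ) := by rw [hrγ]
        _ ≤ |e u| * (c * |e u| ^ γ) := by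
            apply mul_le_mul_of_nonneg_left _ hv0
            exact mul_le_mul_of_nonneg_left hvγ hc.le
        _ = c * (|e u| * |e u| ^ γ) := by ring
    have hb3 : 2 * (y u + r) * ((a*q) * z u ^ (q-1)) ≤ c * (|e u| * |e u| ^ γ) := by
      rw [haq, hy_gamma u]
      calc 2 * (y u + r) * (c/2 * y u ^ γ) = c * ((y u + r) * y u ^ γ) := by ring
        _ ≤ c * (|e u| * |e u| ^ γ) := by
            apply mul_le_mul_of_nonneg_left _ hc.le
            exact mul_le_mul hwv hyγ (Real.rpow_nonneg (hy_nonneg u) _) hv0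
    have hDval : D' u = (-2*c) * |e u| ^ (γ+1) + 2 * e u * Γ u
        + 2 * (y u + r) * ((a*q) * z u ^ (q-1)) := by simp only [hD'_def]
    have hcomb : |e u| * |e u| ^ γ = |e u| ^ (γ+1) := by
      rw [mul_comm]; exact hvv
    rw [hcomb] at hb2 hb3
    rw [hDval]
    calc (-2*c) * |e u| ^ (γ+1) + 2 * e u * Γ u + 2 * (y u + r) * ((a*q) * z u ^ (q-1))
        ≤ (-2*c) * |e u| ^ (γ+1) + c * |e u| ^ (γ+1) + c * |e u| ^ (γ+1) := by linarith
      _ = 0 := by ring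
  have hy0 : y 0 = s₀ := by
    simp only [hy_def, hz_def]
    rw [mul_zero, sub_zero, max_eq_left hA0, hA_def, ← Real.rpow_mul hs₀, hq1γ,
      Real.rpow_one]
  have hD0 : D 0 ≤ 0 := by
    simp only [hD_def, hy0]
    have : (e 0)^2 = s₀^2 := (sq_abs (e 0)).symm
    nlinarith [hr0, hs₀]
  have hDcont : ContinuousOn D (Ici 0) := by
    simp only [hD_def]
    exact (hecont.pow 2).sub
      (((hycont.continuousOn).add continuousOn_const).pow 2)
  have hDt₀ : D t₀ ≤ 0 := by
    by_contra hcon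
    push_neg at hcon
    set S := {u | u ∈ Icc (0:ℝ) t₀ ∧ D u ≤ 0} with hS_def
    have hSne : S.Nonempty := ⟨0, ⟨le_rfl, hpos.le⟩, hD0⟩
    have hSbdd : BddAbove S := BddAbove.mono (fun u hu => hu.1) bddAbove_Icc
    have hSclosed : IsClosed S := by
      have h1 : IsClosed (Icc (0:ℝ) t₀ ∩ D ⁻¹' Iic (0:ℝ)) :=
        (hDcont.mono Icc_subset_Ici_self).preimage_isClosed_of_isClosed
          isClosed_Icc isClosed_Iic
      have h2 : S = Icc 0 t₀ ∩ D ⁻¹' Iic 0 := rfl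
      rw [h2]; exact h1
    set u₀ := sSup S with hu₀_def
    have hu₀S : u₀ ∈ S := hSclosed.csSup_mem hSne hSbdd
    have hu₀0 : 0 ≤ u₀ := hu₀S.1.1
    have hu₀t₀ : u₀ ≤ t₀ := hu₀S.1.2
    have hu₀lt : u₀ < t₀ := by
      rcases lt_or_eq_of_le hu₀t₀ with h | h
      · exact h
      · exfalso; rw [h] at hu₀S; exact absurd hu₀S.2 (not_le.mpr hcon)
    have hgt : ∀ w, u₀ < w → w ≤ t₀ → 0 < D w := by
      intro w hw1 hw2
      by_contra hD2
      push_neg at hD2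
      have hwS : w ∈ S := ⟨⟨le_trans hu₀0 hw1.le, hw2⟩, hD2⟩
      exact absurd (le_csSup hSbdd hwS) (not_le.mpr hw1)
    have hFTC : ∫ w in u₀..t₀, D' w = D t₀ - D u₀ := by
      apply intervalIntegral.integral_eq_sub_of_hasDerivAt
      · intro w hw
        rw [uIcc_of_le hu₀t₀] at hw
        exact hD_deriv w (le_trans hu₀0 hw.1)
      · rw [intervalIntegrable_iff]
        apply hint.mono_set
        rw [uIoc_of_le hu₀t₀]
        exact fun x hx => ⟨le_trans hu₀0 hx.1.le, hx.2⟩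
    have hIneg : ∫ w in u₀..t₀, D' w ≤ 0 := by
      rw [← neg_nonneg, ← intervalIntegral.integral_neg]
      apply intervalIntegral.integral_nonneg_of_ae_restrict hu₀t₀
      have h1 : ∀ᵐ w ∂volume.restrict (Icc u₀ t₀), w ∈ Icc u₀ t₀ :=
        ae_restrict_mem measurableSet_Icc
      have h2 : ∀ᵐ w ∂volume.restrict (Icc u₀ t₀), (w ∈ Ioo 0 t₀ → |Γ w| ≤ N) :=
        ae_restrict_of_ae hNae
      have h3 : ∀ᵐ w ∂volume.restrict (Icc u₀ t₀), w ≠ u₀ :=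
        ae_restrict_of_ae (hsing u₀)
      have h4 : ∀ᵐ w ∂volume.restrict (Icc u₀ t₀), w ≠ t₀ :=
        ae_restrict_of_ae (hsing t₀)
      filter_upwards [h1, h2, h3, h4] with w hw hΓw hne1 hne2
      have hw1 : u₀ < w := lt_of_le_of_ne hw.1 (Ne.symm hne1)
      have hw2 : w < t₀ := lt_of_le_of_ne hw.2 hne2
      have hw0 : 0 < w := lt_of_le_of_lt hu₀0 hw1
      have := hkey w hw0 hw2 (hΓw ⟨hw0, hw2⟩) (hgt w hw1 hw2.le).le
      simp only [Pi.zero_apply]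
      linarith
    linarith [hu₀S.2]
  have hfinal : |e t₀| ≤ y t₀ + r := by
    have hsq : (e t₀)^2 ≤ (y t₀ + r)^2 := by
      simp only [hD_def] at hDt₀; linarith
    have hw0 : 0 ≤ y t₀ + r := add_nonneg (hy_nonneg t₀) hr0
    calc |e t₀| = Real.sqrt ((e t₀)^2) := (Real.sqrt_sq_eq_abs _).symm
      _ ≤ Real.sqrt ((y t₀ + r)^2) := Real.sqrt_le_sqrt hsq
      _ = |y t₀ + r| := Real.sqrt_sq_eq_abs _
      _ = y t₀ + r := abs_of_nonneg hw0
  have hβy : β s₀ t₀ = y t₀ := by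
    simp only [hβ_def, hy_def, hz_def, max_eq_left hs₀, hA_def]
  have hrϑ : r ≤ ϑ X := by
    simp only [hϑ_def]
    rw [← hN_def, ← hr_def]
    linarith
  rw [hβy]
  linarith
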